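/- Let h* : ℝ^{d'} → ℝ ∪ {+∞} be proper, convex, closed, let μ, μ' > 0, β > 0, and let v, w ∈ ℝ^{d'}. Set v⁺ = prox_{(β/μ') h*}( v + (β/μ') w ). Then for all v' ∈ dom h*: (β/μ) h*(v') ≥ (β/μ) h*(v⁺) + ⟨ v + (β/μ) w − v⁺, v' − v⁺ ⟩ − β|1/μ' − 1/μ| ( |h*(v⁺) − h*(v')| + ‖w‖₂ ‖v' − v⁺‖₂ ). -/
import Mathlib


open scoped RealInnerProductSpace

/-- `p` is the proximal point of `F` at `a`, i.e. `p` minimizes `u ↦ ½‖u − a‖² + F(u)`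
(for a proper convex closed `F` this minimizer exists and is unique, so this predicate
characterizes `p = prox_F(a)`). -/
def IsProx {E : Type*} [NormedAddCommGroup E] (F : E → EReal) (a p : E) : Prop :=
  ∀ u, ((1 / 2 * ‖p - a‖ ^ 2 : ℝ) : EReal) + F p ≤ ((1 / 2 * ‖u - a‖ ^ 2 : ℝ) : EReal) + F u

/-- Let `H = h*` be proper convex closed and `v⁺ = prox_{(β/μ')H}(v + (β/μ')w)`. Then
for all `v' ∈ dom H`:
`(β/μ)H(v') ≥ (β/μ)H(v⁺) + ⟨v + (β/μ)w − v⁺, v' − v⁺⟩ − β|1/μ' − 1/μ|(|H(v⁺) − H(v')| + ‖w‖‖v' − v⁺‖)`,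
i.e. `v + (β/μ)w − v⁺` is an `ε`-subgradient of `(β/μ)H` at `v⁺`. -/
theorem prox_with_perturbed_parameter_eps_subgradient {d' : ℕ}
    (H : EuclideanSpace ℝ (Fin d') → EReal)
    (hH_top : ∃ z, H z ≠ ⊤) (hH_bot : ∀ z, H z ≠ ⊥)
    (hH_conv : ∀ u v : EuclideanSpace ℝ (Fin d'), ∀ a b : ℝ, 0 ≤ a → 0 ≤ b → a + b = 1 →
      H (a • u + b • v) ≤ (a : EReal) * H u + (b : EReal) * H v)
    (hH_lsc : LowerSemicontinuous H)
    (mu mu' β : ℝ) (hmu : 0 < mu) (hmu' : 0 < mu') (hβ : 0 < β)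
    (v w vplus : EuclideanSpace ℝ (Fin d'))
    (hprox : IsProx (fun z => ((β / mu' : ℝ) : EReal) * H z) (v + (β / mu') • w) vplus) :
    ∀ v' : EuclideanSpace ℝ (Fin d'), H v' ≠ ⊤ →
      β / mu * (H v').toReal
        ≥ β / mu * (H vplus).toReal + ⟪v + (β / mu) • w - vplus, v' - vplus⟫
          - β * |1 / mu' - 1 / mu| *
              (|(H vplus).toReal - (H v').toReal| + ‖w‖ * ‖v' - vplus‖) := by
  intro v' hv'
  set lam' : ℝ := β / mu' with hlam'
  set lam : ℝ := β / mu with hlam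
  have hlam'pos : 0 < lam' := div_pos hβ hmu'
  have hlampos : 0 < lam := div_pos hβ hmu
  set a : EuclideanSpace ℝ (Fin d') := v + lam' • w with ha
  set Hq : ℝ := (H v').toReal with hHq
  have hHv' : H v' = (Hq : EReal) := (EReal.coe_toReal hv' (hH_bot v')).symm
  -- H vplus ≠ ⊤
  have hptop : H vplus ≠ ⊤ := by
    intro htop
    have h1 := hprox v'
    simp only [htop, hHv'] at h1
    rw [EReal.coe_mul_top_of_pos hlam'pos, EReal.add_top_of_ne_bot (EReal.coe_ne_bot _),
      ← EReal.coe_mul, ← EReal.coe_add] at h1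
    exact (EReal.coe_ne_top _) (top_le_iff.mp h1)
  set Hp : ℝ := (H vplus).toReal with hHp
  have hHvp : H vplus = (Hp : EReal) := (EReal.coe_toReal hptop (hH_bot vplus)).symm
  set D : EuclideanSpace ℝ (Fin d') := v' - vplus with hD
  -- key inequality for t ∈ (0,1]
  have key : ∀ t : ℝ, 0 < t → t ≤ 1 →
      ⟪a - vplus, D⟫ ≤ lam' * (Hq - Hp) + t / 2 * ‖D‖ ^ 2 := by
    intro t ht ht1
    set u : EuclideanSpace ℝ (Fin d') := vplus + t • D with hu
    have huc : u = (1 - t) • vplus + t • v' := by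
      rw [hu, hD]; module
    have hconv := hH_conv vplus v' (1 - t) t (by linarith) ht.le (by ring)
    rw [← huc, hHvp, hHv', ← EReal.coe_mul, ← EReal.coe_mul, ← EReal.coe_add] at hconv
    have hut : H u ≠ ⊤ := fun h => (EReal.coe_ne_top _) (top_le_iff.mp (h ▸ hconv))
    set Hu : ℝ := (H u).toReal with hHu
    have hHuc : H u = (Hu : EReal) := (EReal.coe_toReal hut (hH_bot u)).symm
    rw [hHuc, EReal.coe_le_coe_iff] at hconv
    have h1 := hprox u
    simp only [hHvp, hHuc, ← ha] at h1
    rw [← EReal.coe_mul, ← EReal.coe_mul, ← EReal.coe_add, ← EReal.coe_add,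
      EReal.coe_le_coe_iff] at h1
    -- expand the norm
    have hexp : ‖u - a‖ ^ 2 = ‖vplus - a‖ ^ 2 + 2 * (t * ⟪vplus - a, D⟫) + t ^ 2 * ‖D‖ ^ 2 := by
      have : u - a = (vplus - a) + t • D := by rw [hu]; abel
      have hns : ‖t • D‖ = t * ‖D‖ := by
        rw [norm_smul]; simp [abs_of_pos ht]
      rw [this, norm_add_sq_real, real_inner_smul_right, hns]
      ring
    have hinner : ⟪a - vplus, D⟫ = -⟪vplus - a, D⟫ := by
      rw [show a - vplus = -(vplus - a) by abel, inner_neg_left]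
    rw [hinner]
    have hchain : 1 / 2 * ‖vplus - a‖ ^ 2 + lam' * Hp ≤
        1 / 2 * ‖u - a‖ ^ 2 + lam' * ((1 - t) * Hp + t * Hq) := by
      calc _ ≤ 1 / 2 * ‖u - a‖ ^ 2 + lam' * Hu := h1
        _ ≤ _ := by nlinarith [hlam'pos.le]
    rw [hexp] at hchain
    have h2 : 0 ≤ t * (⟪vplus - a, D⟫ + lam' * (Hq - Hp) + t / 2 * ‖D‖ ^ 2) := by
      have h := sub_nonneg.mpr hchain
      calc (0:ℝ) ≤ _ := h
        _ = _ := by ring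
    have h3 : 0 ≤ ⟪vplus - a, D⟫ + lam' * (Hq - Hp) + t / 2 * ‖D‖ ^ 2 :=
      nonneg_of_mul_nonneg_right h2 ht
    linarith
  have subgrad : ⟪a - vplus, D⟫ ≤ lam' * (Hq - Hp) := by
    by_contra hcon
    push_neg at hcon
    set ε : ℝ := ⟪a - vplus, D⟫ - lam' * (Hq - Hp) with hε
    have hεpos : 0 < ε := by linarith
    set t : ℝ := min 1 (ε / (‖D‖ ^ 2 + 1)) with htdef
    have hden : (0:ℝ) < ‖D‖ ^ 2 + 1 := by positivity
    have htpos : 0 < t := lt_min one_pos (div_pos hεpos hden)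
    have ht1 : t ≤ 1 := min_le_left _ _
    have hkey := key t htpos ht1
    have ht2 : t * ‖D‖ ^ 2 ≤ ε := by
      have : t ≤ ε / (‖D‖ ^ 2 + 1) := min_le_right _ _
      have h3 : t * (‖D‖ ^ 2 + 1) ≤ ε := by
        rw [← div_mul_cancel₀ ε hden.ne']
        exact mul_le_mul_of_nonneg_right this hden.le
      nlinarith
    nlinarith
  -- finish
  have hcs : |⟪w, D⟫| ≤ ‖w‖ * ‖D‖ := abs_real_inner_le_norm w D
  have habs : |lam - lam'| = β * |1 / mu' - 1 / mu| := by
    have h0 : lam - lam' = β * (1 / mu - 1 / mu') := by rw [hlam, hlam']; ring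
    rw [h0, abs_mul, abs_of_pos hβ, abs_sub_comm]
  have hsplit : ⟪v + lam • w - vplus, D⟫ = ⟪a - vplus, D⟫ + (lam - lam') * ⟪w, D⟫ := by
    have : v + lam • w - vplus = (a - vplus) + (lam - lam') • w := by
      rw [ha]; module
    rw [this, inner_add_left, real_inner_smul_left]
  rw [hsplit, ← habs]
  have h4 : (lam - lam') * ⟪w, D⟫ ≤ |lam - lam'| * (‖w‖ * ‖D‖) := by
    calc (lam - lam') * ⟪w, D⟫ ≤ |(lam - lam') * ⟪w, D⟫| := le_abs_self _
      _ = |lam - lam'| * |⟪w, D⟫| := abs_mul _ _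
      _ ≤ _ := mul_le_mul_of_nonneg_left hcs (abs_nonneg _)
  have h5 : (lam' - lam) * (Hq - Hp) ≤ |lam - lam'| * |Hp - Hq| := by
    calc (lam' - lam) * (Hq - Hp) ≤ |(lam' - lam) * (Hq - Hp)| := le_abs_self _
      _ = |lam - lam'| * |Hp - Hq| := by
          rw [abs_mul, abs_sub_comm lam' lam, abs_sub_comm Hq Hp]
  nlinarith
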